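/- Let α = (√13+3)/4, δ = (5−√13)/6, R = (√13−1)/2. For all nonnegative reals w_f, w_f', w_i, w_j, w_e with w_e < w_i, w_j ≤ w_e, and 2α·w_i < w_f + w_f', we have w_f + w_f' + w_j + (1−δ)·w_i − (R−1+2δ)·w_e < R·(w_f + w_f'). -/
import Mathlib


theorem stmt12 (α δ R : ℝ)
    (hα : α = (Real.sqrt 13 + 3) / 4)
    (hδ : δ = (5 - Real.sqrt 13) / 6)
    (hR : R = (Real.sqrt 13 - 1) / 2)
    (w_f w_f' w_i w_j w_e : ℝ)
    (hf : 0 ≤ w_f) (hf' : 0 ≤ w_f') (hi : 0 ≤ w_i) (hj : 0 ≤ w_j) (he : 0 ≤ w_e)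
    (h1 : w_e < w_i) (h2 : w_j ≤ w_e) (h3 : 2 * α * w_i < w_f + w_f') :
    w_f + w_f' + w_j + (1 - δ) * w_i - (R - 1 + 2 * δ) * w_e < R * (w_f + w_f') := by
  have hs : Real.sqrt 13 ^ 2 = 13 := Real.sq_sqrt (by norm_num)
  have hs3 : 3 < Real.sqrt 13 := by
    nlinarith [Real.sqrt_nonneg 13]
  subst hα hδ hR
  nlinarith [mul_pos (show (0:ℝ) < (Real.sqrt 13 - 3)/2 by linarith)
      (sub_pos.2 h3), mul_le_mul_of_nonneg_left h1.le
      (show (0:ℝ) ≤ (5 - Real.sqrt 13)/6 by nlinarith)]
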